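/- Let λ < 0, σ₀ ∈ ℝ, x₀ > 0, and let V : [0,∞) → ℝ be continuous with V(x) = 0 for all x ≥ x₀. Let φ : [0,∞) → ℝ be twice continuously differentiable, positive, in L²(0,∞), satisfying −φ'' + Vφ = λφ on [0,∞), φ'(0) = σ₀φ(0), and φ(x) = C e^{−√|λ| x} for all x ≥ x₀ for some constant C > 0. Set γ = −1/‖φ‖², Φ(x) = 1 + γ∫₀ˣ φ(t)² dt, G(x) = γφ(x)²/Φ(x), and σ₁ = σ₀ + φ(0)²/‖φ‖². Then ∫₀^∞ G'(x)(G'(x) − V(x)) dx = −(4/3)|λ|^{3/2} + |λ|(σ₁ − σ₀) − (1/3)(σ₁³ − σ₀³). -/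

import Mathlib

open MeasureTheory Set

/-- One-sided derivative on `[0, ∞)`. -/
noncomputable def D (f : ℝ → ℝ) : ℝ → ℝ := derivWithin f (Set.Ici 0)

set_option maxHeartbeats 1600000 in
/-- The value of the integral `∫₀^∞ G'(G' - V) dx` arising in one step of the
double commutation method. -/
theorem integral_G_deriv
    (V φ : ℝ → ℝ) (lam σ₀ x₀ C : ℝ) (hlam : lam < 0) (hx₀ : 0 < x₀) (hC : 0 < C)
    (hV : ContinuousOn V (Set.Ici 0))
    (hVsupp : ∀ x, x₀ ≤ x → V x = 0)
    (hφ : ContDiffOn ℝ 2 φ (Set.Ici 0))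
    (hφpos : ∀ x ∈ Set.Ici (0:ℝ), 0 < φ x)
    (hφL2 : MemLp φ 2 (volume.restrict (Set.Ioi (0:ℝ))))
    (hφode : ∀ x ∈ Set.Ici (0:ℝ), -(D (D φ) x) + V x * φ x = lam * φ x)
    (hφbc : D φ 0 = σ₀ * φ 0)
    (hφdecay : ∀ x, x₀ ≤ x → φ x = C * Real.exp (-Real.sqrt |lam| * x))
    (γ : ℝ) (hγ : γ = -1 / (∫ x in Set.Ioi (0:ℝ), (φ x) ^ 2))
    (Φ : ℝ → ℝ) (hΦ : ∀ x, Φ x = 1 + γ * ∫ t in (0:ℝ)..x, (φ t) ^ 2)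
    (G : ℝ → ℝ) (hG : ∀ x, G x = γ * (φ x) ^ 2 / Φ x)
    (σ₁ : ℝ) (hσ₁ : σ₁ = σ₀ + (φ 0) ^ 2 / (∫ x in Set.Ioi (0:ℝ), (φ x) ^ 2)) :
    ∫ x in Set.Ioi (0:ℝ), D G x * (D G x - V x)
      = -(4/3) * |lam| ^ ((3:ℝ)/2) + |lam| * (σ₁ - σ₀) - 1/3 * (σ₁ ^ 3 - σ₀ ^ 3) := by
  have habs : |lam| = -lam := abs_of_neg hlam
  set k : ℝ := Real.sqrt |lam| with hk_def
  have hkpos : 0 < k := Real.sqrt_pos.mpr (by rw [habs]; linarith)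
  have hk2 : k ^ 2 = -lam := by rw [hk_def, Real.sq_sqrt (abs_nonneg lam), habs]
  have hQint : IntegrableOn (fun x => (φ x) ^ 2) (Ioi (0:ℝ)) volume := hφL2.integrable_sq
  set Q : ℝ := ∫ x in Set.Ioi (0:ℝ), (φ x) ^ 2 with hQ_def
  have hφcont : ContinuousOn φ (Ici 0) := hφ.continuousOn
  have hsqcont : ContinuousOn (fun x => (φ x) ^ 2) (Ici 0) := hφcont.pow 2
  have hDφcont : ContinuousOn (D φ) (Ici 0) :=
    hφ.continuousOn_derivWithin (uniqueDiffOn_Ici 0) (by norm_num)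
  have hφne : ∀ x ∈ Ici (0:ℝ), φ x ≠ 0 := fun x hx => (hφpos x hx).ne'
  -- tail positivity
  have htailpos : ∀ x : ℝ, 0 ≤ x → 0 < ∫ t in Ioi x, (φ t) ^ 2 := by
    intro x hx
    have hsub : Ioc x (x+1) ⊆ Ioi x := Ioc_subset_Ioi_self
    have hsub0 : Ioi x ⊆ Ioi (0:ℝ) := Ioi_subset_Ioi hx
    have hint : IntegrableOn (fun t => (φ t) ^ 2) (Ioi x) volume := hQint.mono_set hsub0
    have h1 : (0:ℝ) < ∫ t in Ioc x (x+1), (φ t) ^ 2 := by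
      rw [← intervalIntegral.integral_of_le (by linarith : x ≤ x + 1)]
      apply intervalIntegral.intervalIntegral_pos_of_pos_on
      · exact (intervalIntegrable_iff_integrableOn_Ioc_of_le (by linarith)).mpr
          (hint.mono_set hsub)
      · intro t ht
        exact pow_pos (hφpos t (le_of_lt (lt_of_le_of_lt hx ht.1))) 2
      · linarith
    have h2 : (∫ t in Ioc x (x+1), (φ t) ^ 2) ≤ ∫ t in Ioi x, (φ t) ^ 2 := by
      apply setIntegral_mono_set hint
      · filter_upwards with t using sq_nonneg _
      · exact HasSubset.Subset.eventuallyLE hsub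
    linarith
  have hQpos : 0 < Q := htailpos 0 le_rfl
  -- decomposition of Q
  have hQdecomp : ∀ x : ℝ, 0 ≤ x →
      Q = (∫ t in (0:ℝ)..x, (φ t) ^ 2) + ∫ t in Ioi x, (φ t) ^ 2 := by
    intro x hx
    rw [intervalIntegral.integral_of_le hx, hQ_def,
      ← setIntegral_union (Ioc_disjoint_Ioi le_rfl) measurableSet_Ioi
        (hQint.mono_set Ioc_subset_Ioi_self) (hQint.mono_set (Ioi_subset_Ioi hx)),
      Ioc_union_Ioi_eq_Ioi hx]
  have hΦeq : ∀ x : ℝ, 0 ≤ x → Φ x = (∫ t in Ioi x, (φ t) ^ 2) / Q := by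
    intro x hx
    have h := hQdecomp x hx
    rw [hΦ x, hγ]
    field_simp
    linarith
  have hΦpos : ∀ x ∈ Ici (0:ℝ), 0 < Φ x := by
    intro x hx
    rw [hΦeq x hx]
    exact div_pos (htailpos x hx) hQpos
  -- explicit tail for x ≥ x₀
  have htail : ∀ x : ℝ, x₀ ≤ x →
      (∫ t in Ioi x, (φ t) ^ 2) = C ^ 2 * Real.exp (-(2*k*x)) / (2*k) := by
    intro x hx
    have heq : EqOn (fun t => (φ t) ^ 2) (fun t => C ^ 2 * Real.exp (-(2*k*t))) (Ioi x) := by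
      intro t ht
      have : -(2*k*t) = (-k*t) + (-k*t) := by ring
      simp only [hφdecay t (le_trans hx (le_of_lt ht)), this, Real.exp_add]
      ring
    rw [setIntegral_congr_fun measurableSet_Ioi heq]
    have hderiv : ∀ t ∈ Ioi x, HasDerivAt (fun s => -C^2/(2*k) * Real.exp (-(2*k*s)))
        (C ^ 2 * Real.exp (-(2*k*t))) t := by
      intro t _
      have h1 : HasDerivAt (fun s : ℝ => -(2*k*s)) (-(2*k)) t := by
        simpa [neg_mul, mul_assoc] using (hasDerivAt_id t).const_mul (-(2*k))
      have h2 := (Real.hasDerivAt_exp (-(2*k*t))).comp t h1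
      have h3 := h2.const_mul (-C^2/(2*k))
      refine h3.congr_deriv ?_
      field_simp
    have hcont : ContinuousWithinAt (fun s => -C^2/(2*k) * Real.exp (-(2*k*s))) (Ici x) x := by
      apply Continuous.continuousWithinAt
      continuity
    have htend : Filter.Tendsto (fun s => -C^2/(2*k) * Real.exp (-(2*k*s)))
        Filter.atTop (nhds 0) := by
      have h1 : Filter.Tendsto (fun s : ℝ => 2*k*s) Filter.atTop Filter.atTop :=
        Filter.Tendsto.const_mul_atTop (by positivity) Filter.tendsto_id
      have h2 : Filter.Tendsto (fun s : ℝ => Real.exp (-(2*k*s))) Filter.atTop (nhds 0) :=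
        Real.tendsto_exp_neg_atTop_nhds_zero.comp h1
      have h3 := h2.const_mul (-C^2/(2*k))
      simpa using h3
    rw [integral_Ioi_of_hasDerivAt_of_nonneg hcont hderiv
      (fun t _ => by positivity) htend]
    field_simp
    try ring
  -- G is constant -2k on [x₀, ∞)
  have hGconst : ∀ x : ℝ, x₀ ≤ x → G x = -(2*k) := by
    intro x hx
    have hx0 : (0:ℝ) ≤ x := le_trans hx₀.le hx
    have hexp : Real.exp (-(2*k*x)) ≠ 0 := Real.exp_ne_zero _
    have hφx : (φ x) ^ 2 = C ^ 2 * Real.exp (-(2*k*x)) := by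
      have : -(2*k*x) = (-k*x) + (-k*x) := by ring
      rw [hφdecay x hx, this, Real.exp_add]
      ring
    rw [hG x, hΦeq x hx0, htail x hx, hφx, hγ]
    field_simp
  -- FTC for Φ
  have hψd : ∀ x ∈ Ici (0:ℝ), HasDerivWithinAt (fun y => ∫ t in (0:ℝ)..y, (φ t) ^ 2)
      ((φ x) ^ 2) (Ici 0) x := by
    intro x hx
    rcases eq_or_lt_of_le (show (0:ℝ) ≤ x from hx) with h0 | h0
    · subst h0
      apply intervalIntegral.integral_hasDerivWithinAt_right (t := Ioi 0)
        IntervalIntegrable.refl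
      · exact ⟨Ici 0, Filter.mem_of_superset self_mem_nhdsWithin Ioi_subset_Ici_self,
          hsqcont.aestronglyMeasurable measurableSet_Ici⟩
      · exact (hsqcont 0 self_mem_Ici).mono Ioi_subset_Ici_self
    · have hmem : Ici (0:ℝ) ∈ nhds x := Ici_mem_nhds h0
      have hf : IntervalIntegrable (fun t => (φ t) ^ 2) volume 0 x := by
        apply ContinuousOn.intervalIntegrable
        apply hsqcont.mono
        rw [uIcc_of_le (le_of_lt h0)]
        exact Icc_subset_Ici_self
      have hmeas : StronglyMeasurableAtFilter (fun t => (φ t) ^ 2) (nhds x) volume :=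
        ⟨Ici 0, hmem, hsqcont.aestronglyMeasurable measurableSet_Ici⟩
      exact (intervalIntegral.integral_hasDerivAt_right hf hmeas
        (hsqcont.continuousAt hmem)).hasDerivWithinAt
  have hΦd : ∀ x ∈ Ici (0:ℝ), HasDerivWithinAt Φ (γ * (φ x) ^ 2) (Ici 0) x := by
    intro x hx
    have hfun : Φ = fun y => 1 + γ * ∫ t in (0:ℝ)..y, (φ t) ^ 2 := funext hΦ
    rw [hfun]
    exact ((hψd x hx).const_mul γ).const_add 1
  have hφd : ∀ x ∈ Ici (0:ℝ), HasDerivWithinAt φ (D φ x) (Ici 0) x := fun x hx =>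
    ((hφ.differentiableOn (by norm_num)) x hx).hasDerivWithinAt
  have hφdd : ∀ x ∈ Ici (0:ℝ), HasDerivWithinAt (D φ) (D (D φ) x) (Ici 0) x := by
    intro x hx
    have h2 : ContDiffOn ℝ 1 (derivWithin φ (Ici 0)) (Ici 0) :=
      hφ.derivWithin (uniqueDiffOn_Ici 0) (by norm_num)
    exact ((h2.differentiableOn (by norm_num)) x hx).hasDerivWithinAt
  set gd : ℝ → ℝ := fun x => (γ*(2*φ x*D φ x)*Φ x - (γ*(φ x)^2)^2)/(Φ x)^2 with hgd_def
  have hGd : ∀ x ∈ Ici (0:ℝ), HasDerivWithinAt G (gd x) (Ici 0) x := by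
    intro x hx
    have hfun : G = fun y => γ * (φ y) ^ 2 / Φ y := funext hG
    rw [hfun]
    have h := (((hφd x hx).pow 2).const_mul γ).div (hΦd x hx) (hΦpos x hx).ne'
    refine h.congr_deriv ?_
    simp only [hgd_def, Pi.pow_apply]
    push_cast
    ring
  have hDG : ∀ x ∈ Ici (0:ℝ), D G x = gd x := fun x hx =>
    (hGd x hx).derivWithin (uniqueDiffOn_Ici 0 x hx)
  -- the antiderivative F
  set u : ℝ → ℝ := fun y => D φ y / φ y with hu_def
  set w : ℝ → ℝ := fun y => u y - G y with hw_def
  set F : ℝ → ℝ := fun y => k^2 * u y - (u y)^3/3 - (k^2 * w y - (w y)^3/3) with hF_def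
  have hFd : ∀ x ∈ Ici (0:ℝ), HasDerivWithinAt F (gd x * (gd x - V x)) (Ici 0) x := by
    intro x hx
    have hp : φ x ≠ 0 := hφne x hx
    have hΦne : Φ x ≠ 0 := (hΦpos x hx).ne'
    have hdd : D (D φ) x = (V x - lam) * φ x := by
      have h := hφode x hx
      linarith [h, (by ring : (V x - lam) * φ x = V x * φ x - lam * φ x)]
    have h1 : HasDerivWithinAt u ((D (D φ) x * φ x - D φ x * D φ x)/(φ x)^2) (Ici 0) x := by
      rw [hu_def]
      exact (hφdd x hx).div (hφd x hx) hp
    have h2 : HasDerivWithinAt w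
        ((D (D φ) x * φ x - D φ x * D φ x)/(φ x)^2 - gd x) (Ici 0) x := by
      rw [hw_def]
      exact h1.sub (hGd x hx)
    have h3 := ((h1.const_mul (k^2)).sub ((h1.pow 3).div_const 3)).sub
      ((h2.const_mul (k^2)).sub ((h2.pow 3).div_const 3))
    rw [hF_def]
    refine h3.congr_deriv ?_
    simp only [hu_def, hw_def, hgd_def, hG x, hdd]
    push_cast
    rw [show k^2 = -lam from hk2]
    field_simp
    ring
  have hFcont : ContinuousOn F (Ici 0) := fun x hx =>
    (hFd x hx).differentiableWithinAt.continuousWithinAt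
  -- continuity of the integrand formula
  have hΦcont : ContinuousOn Φ (Ici 0) := fun x hx =>
    (hΦd x hx).differentiableWithinAt.continuousWithinAt
  have hgdcont : ContinuousOn gd (Ici 0) := by
    apply ContinuousOn.div
    · exact ((((continuousOn_const.mul ((continuousOn_const.mul hφcont).mul
        hDφcont)).mul hΦcont)).sub ((continuousOn_const.mul hsqcont).pow 2))
    · exact hΦcont.pow 2
    · exact fun x hx => pow_ne_zero 2 (hΦpos x hx).ne'
  have hintegrand_cont : ContinuousOn (fun x => gd x * (gd x - V x)) (Ici 0) :=
    hgdcont.mul (hgdcont.sub hV)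
  -- the integrand vanishes beyond x₀
  have hzero : ∀ x ∈ Ioi x₀, D G x * (D G x - V x) = 0 := by
    intro x hx
    have hx' : x₀ < x := hx
    have hDG0 : D G x = 0 := by
      have hmem : Ici (0:ℝ) ∈ nhds x := Ici_mem_nhds (lt_trans hx₀ hx')
      rw [show D G x = derivWithin G (Ici 0) x from rfl, derivWithin_of_mem_nhds hmem]
      have hev : G =ᶠ[nhds x] (fun _ => -(2*k)) := by
        filter_upwards [Ioi_mem_nhds hx'] with y hy
        exact hGconst y (le_of_lt hy)
      rw [hev.deriv_eq]
      simp
    rw [hDG0]; ring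
  -- integrability on the two pieces
  have hIoc_int : IntegrableOn (fun x => D G x * (D G x - V x)) (Ioc 0 x₀) volume := by
    have h1 : IntegrableOn (fun x => gd x * (gd x - V x)) (Ioc 0 x₀) volume :=
      ((hintegrand_cont.mono Icc_subset_Ici_self).integrableOn_Icc).mono_set
        Ioc_subset_Icc_self
    exact h1.congr_fun (fun x hx => by rw [hDG x (le_of_lt hx.1)]) measurableSet_Ioc
  have hIoi_int : IntegrableOn (fun x => D G x * (D G x - V x)) (Ioi x₀) volume :=
    (integrableOn_zero).congr_fun (fun x hx => (hzero x hx).symm) measurableSet_Ioi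
  -- split the integral
  have hsplit : (∫ x in Set.Ioi (0:ℝ), D G x * (D G x - V x))
      = ∫ x in Set.Ioc (0:ℝ) x₀, D G x * (D G x - V x) := by
    rw [← Ioc_union_Ioi_eq_Ioi hx₀.le,
      setIntegral_union (Ioc_disjoint_Ioi le_rfl) measurableSet_Ioi hIoc_int hIoi_int,
      setIntegral_congr_fun measurableSet_Ioi hzero]
    simp
  -- FTC on [0, x₀]
  have hFTC : (∫ x in Set.Ioc (0:ℝ) x₀, D G x * (D G x - V x)) = F x₀ - F 0 := by
    rw [← intervalIntegral.integral_of_le hx₀.le]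
    apply intervalIntegral.integral_eq_sub_of_hasDeriv_right_of_le hx₀.le
      (hFcont.mono Icc_subset_Ici_self)
    · intro x hx
      have hxI : x ∈ Ici (0:ℝ) := le_of_lt hx.1
      rw [hDG x hxI]
      exact ((hFd x hxI).hasDerivAt (Ici_mem_nhds hx.1)).hasDerivWithinAt
    · exact (intervalIntegrable_iff_integrableOn_Ioc_of_le hx₀.le).mpr hIoc_int
  -- endpoint values
  have hφ0 : φ 0 ≠ 0 := hφne 0 self_mem_Ici
  have hu0 : u 0 = σ₀ := by
    simp only [hu_def, hφbc]
    field_simp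
  have hΦ0 : Φ 0 = 1 := by rw [hΦ 0]; simp
  have hG0 : G 0 = γ * (φ 0) ^ 2 := by rw [hG 0, hΦ0, div_one]
  have hw0 : w 0 = σ₁ := by
    simp only [hw_def, hu0, hG0, hγ, hσ₁]
    field_simp
    ring
  have hDφx₀ : D φ x₀ = -k * φ x₀ := by
    have h1 : HasDerivWithinAt φ (D φ x₀) (Ici x₀) x₀ :=
      (hφd x₀ hx₀.le).mono (Ici_subset_Ici.mpr hx₀.le)
    have h2 : HasDerivWithinAt (fun y => C * Real.exp (-k*y))
        (C * Real.exp (-k*x₀) * (-k)) (Ici x₀) x₀ := by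
      have hid : HasDerivAt (fun y : ℝ => -k*y) (-k) x₀ := by
        have := (hasDerivAt_id x₀).const_mul (-k)
        simpa using this
      have h := ((Real.hasDerivAt_exp (-k*x₀)).comp x₀ hid).const_mul C
      apply HasDerivAt.hasDerivWithinAt
      refine h.congr_deriv ?_
      ring
    have h3 : HasDerivWithinAt φ (C * Real.exp (-k*x₀) * (-k)) (Ici x₀) x₀ :=
      h2.congr (fun y hy => hφdecay y hy) (hφdecay x₀ le_rfl)
    have e1 := h1.derivWithin (uniqueDiffOn_Ici x₀ x₀ self_mem_Ici)
    have e2 := h3.derivWithin (uniqueDiffOn_Ici x₀ x₀ self_mem_Ici)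
    rw [← e1, e2, ← hφdecay x₀ le_rfl]
    ring
  have hφx₀ : φ x₀ ≠ 0 := hφne x₀ hx₀.le
  have hux₀ : u x₀ = -k := by
    simp only [hu_def, hDφx₀]
    field_simp
  have hGx₀ : G x₀ = -(2*k) := hGconst x₀ le_rfl
  have hwx₀ : w x₀ = k := by
    simp only [hw_def, hux₀, hGx₀]
    ring
  -- final computation
  have hk3 : |lam| ^ ((3:ℝ)/2) = k ^ 3 := by
    have h1 : |lam| ^ ((3:ℝ)/2) = (|lam| ^ ((1:ℝ)/2)) ^ (3:ℕ) := by
      rw [← Real.rpow_natCast (|lam| ^ ((1:ℝ)/2)) 3, ← Real.rpow_mul (abs_nonneg lam)]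
      norm_num
    rw [h1, hk_def, Real.sqrt_eq_rpow]
  have habs2 : |lam| = k ^ 2 := by rw [hk2, habs]
  rw [hsplit, hFTC, hF_def]
  simp only [hu0, hw0, hux₀, hwx₀]
  rw [hk3, habs2]
  ring
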